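/- arXiv:0901.0435 — 2 statements merged into one kernel-verified Lean document; each statement's English description precedes it below -/
import Mathlib

section
/- Let n be a positive integer and let b, d be real numbers with d > 0 and b > d + n - 1. Then the polynomial ₂F₁(-n, b; d; z) has exactly n zeros, all of which are real and simple and lie in the open interval (0, 1). -/
/-- The Pochhammer symbol `(x)_k = x (x+1) ⋯ (x+k-1)` for a real number `x`. -/
noncomputable def poch (x : ℝ) (k : ℕ) : ℝ := ∏ i ∈ Finset.range k, (x + i)

/-- The terminating Gauss hypergeometric polynomial `₂F₁(-n, b; d; z)`
    as a real polynomial in `z`. -/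
noncomputable def hypPoly (n : ℕ) (b d : ℝ) : Polynomial ℝ :=
  ∑ k ∈ Finset.range (n + 1),
    Polynomial.C ((poch (-(n : ℝ)) k * poch b k) / (poch d k * (Nat.factorial k))) *
      Polynomial.X ^ k

lemma poch_zero (x : ℝ) : poch x 0 = 1 := by simp [poch]
lemma poch_succ (x : ℝ) (k : ℕ) : poch x (k+1) = poch x k * (x + k) := Finset.prod_range_succ _ _
lemma poch_succ' (x : ℝ) (k : ℕ) : poch x (k+1) = x * poch (x+1) k := by
  rw [poch, Finset.prod_range_succ']
  have h : ∏ i ∈ Finset.range k, (x + ↑(i+1)) = poch (x+1) k := by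
    apply Finset.prod_congr rfl; intro i _; push_cast; ring
  rw [h]; simp [mul_comm]
lemma poch_pos {x : ℝ} (hx : 0 < x) (k : ℕ) : 0 < poch x k := by
  apply Finset.prod_pos; intro i _; positivity
lemma poch_neg_nat_eq_zero {k m : ℕ} (h : k < m) : poch (-(k:ℝ)) m = 0 := by
  apply Finset.prod_eq_zero (Finset.mem_range.mpr h); simp
lemma poch_neg_nat_self_ne_zero (k : ℕ) : poch (-(k:ℝ)) k ≠ 0 := by
  apply Finset.prod_ne_zero_iff.mpr
  intro i hi
  have : i < k := Finset.mem_range.mp hi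
  have : (i:ℝ) < k := by exact_mod_cast this
  intro h; linarith [h]


lemma hypPoly_coeff (k : ℕ) (u c : ℝ) (m : ℕ) :
    (hypPoly k u c).coeff m =
      if m ≤ k then poch (-(k:ℝ)) m * poch u m / (poch c m * (Nat.factorial m)) else 0 := by
  rw [hypPoly, Polynomial.finset_sum_coeff]
  simp only [Polynomial.coeff_C_mul, Polynomial.coeff_X_pow, mul_ite, mul_one, mul_zero]
  rw [Finset.sum_ite_eq (Finset.range (k+1)) m]
  simp [Finset.mem_range, Nat.lt_succ_iff]

lemma hypPoly_coeff' (k : ℕ) (u c : ℝ) (m : ℕ) :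
    (hypPoly k u c).coeff m =
      poch (-(k:ℝ)) m * poch u m / (poch c m * (Nat.factorial m)) := by
  rw [hypPoly_coeff]
  split_ifs with h
  · rfl
  · rw [poch_neg_nat_eq_zero (by omega)]; simp


open Polynomial in
lemma contig (k : ℕ) (u c : ℝ) (hc : 1 < c) :
    C (c-1) * hypPoly (k+1) (u-1) (c-1)
      = (C (c-1) - C (u-(k:ℝ)-1) * X) * hypPoly k u c
        + X * (1 - X) * derivative (hypPoly k u c) := by
  have hX : ∀ (q : ℝ[X]) (m : ℕ), (X * q).coeff m = if m = 0 then 0 else q.coeff (m-1) := by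
    intro q m
    cases m with
    | zero => simp
    | succ m => simp [Polynomial.coeff_X_mul]
  ext m
  have expand : ((C (c-1) - C (u-(k:ℝ)-1) * X) * hypPoly k u c
        + X * (1 - X) * derivative (hypPoly k u c)).coeff m
      = (c-1) * (hypPoly k u c).coeff m
        - (u-(k:ℝ)-1) * (X * hypPoly k u c).coeff m
        + (X * derivative (hypPoly k u c)).coeff m
        - (X * (X * derivative (hypPoly k u c))).coeff m := by
    have : X * (1 - X) * derivative (hypPoly k u c)
        = X * derivative (hypPoly k u c) - X * (X * derivative (hypPoly k u c)) := by ring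
    rw [this]
    simp only [Polynomial.coeff_add, Polynomial.coeff_sub, sub_mul, mul_assoc,
      Polynomial.coeff_C_mul]
    ring
  rw [expand, Polynomial.coeff_C_mul]
  -- nonvanishing facts
  have hcpos : (0:ℝ) < c := by linarith
  have hc1 : c - 1 ≠ 0 := by linarith
  cases m with
  | zero =>
    simp [hX, hypPoly_coeff', poch]
  | succ m =>
    have hXd : (X * derivative (hypPoly k u c)).coeff m = (hypPoly k u c).coeff m * m := by
      rw [hX]
      cases m with
      | zero => simp
      | succ m => rw [if_neg (Nat.succ_ne_zero m), Nat.add_sub_cancel, Polynomial.coeff_derivative]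
                  push_cast; ring
    rw [Polynomial.coeff_X_mul, Polynomial.coeff_X_mul, Polynomial.coeff_X_mul, hXd,
      Polynomial.coeff_derivative]
    rw [hypPoly_coeff', hypPoly_coeff', hypPoly_coeff']
    -- expansion lemmas
    have e1 : poch (-((k:ℕ):ℝ)-1) (m+1) = (-(k:ℝ)-1) * poch (-(k:ℝ)) m := by
      rw [poch_succ']; norm_num
    have e2 : poch (u-1) (m+1) = (u-1) * poch u m := by
      rw [poch_succ']; norm_num
    have e3 : poch (c-1) (m+1) = (c-1) * poch c m := by
      rw [poch_succ']; norm_num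
    have e4 : poch (-(k:ℝ)) (m+1) = poch (-(k:ℝ)) m * (-(k:ℝ)+m) := poch_succ _ _
    have e5 : poch u (m+1) = poch u m * (u+m) := poch_succ _ _
    have e6 : poch c (m+1) = poch c m * (c+m) := poch_succ _ _
    have hneg : (-((k+1:ℕ):ℝ)) = -(k:ℝ)-1 := by push_cast; ring
    rw [hneg, e1, e2, e3, e4, e5, e6]
    have hpc : poch c m ≠ 0 := ne_of_gt (poch_pos hcpos m)
    have hcm : c + m ≠ 0 := by positivity
    have hfac : ((m+1).factorial : ℝ) ≠ 0 := by positivity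
    have hfac' : ((m).factorial : ℝ) ≠ 0 := by positivity
    have hfs : ((m+1).factorial : ℝ) = (m+1) * m.factorial := by
      rw [Nat.factorial_succ]; push_cast; ring
    rw [hfs]
    field_simp
    ring


noncomputable def Fk (A B : ℝ) (k : ℕ) : ℝ → ℝ := fun z =>
  z ^ (A - (k:ℝ)) * (1-z) ^ (B - (k:ℝ)) * (hypPoly k (A+B-(k:ℝ)+1) (A-(k:ℝ)+1)).eval z

lemma Fk_hasDerivAt (A B : ℝ) (k : ℕ) (hA : (k:ℝ) < A) {z : ℝ} (hz : z ∈ Set.Ioo (0:ℝ) 1) :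
    HasDerivAt (Fk A B k) ((A - k) * Fk A B (k+1) z) z := by
  obtain ⟨hz0, hz1⟩ := hz
  have hz1' : (1:ℝ) - z ≠ 0 := by linarith
  have hP : True := trivial
  have h1 : HasDerivAt (fun z : ℝ => z ^ (A - (k:ℝ))) ((A - (k:ℝ)) * z ^ (A - (k:ℝ) - 1)) z :=
    Real.hasDerivAt_rpow_const (Or.inl hz0.ne')
  have h2' : HasDerivAt (fun z : ℝ => (1:ℝ) - z) (-1) z := by
    simpa using (hasDerivAt_id z).const_sub 1
  have h2 : HasDerivAt (fun z : ℝ => ((1:ℝ)-z) ^ (B - (k:ℝ)))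
      ((B - (k:ℝ)) * ((1:ℝ)-z) ^ (B - (k:ℝ) - 1) * (-1)) z :=
    (Real.hasDerivAt_rpow_const (Or.inl hz1')).comp z h2'
  have h3 : HasDerivAt (fun z => (hypPoly k (A+B-(k:ℝ)+1) (A-(k:ℝ)+1)).eval z)
      ((hypPoly k (A+B-(k:ℝ)+1) (A-(k:ℝ)+1)).derivative.eval z) z :=
    (hypPoly k (A+B-(k:ℝ)+1) (A-(k:ℝ)+1)).hasDerivAt z
  have total := (h1.mul h2).mul h3
  convert total using 1
  · rfl
  · rfl
  · rfl
  -- value equality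
  have E0 := congrArg (Polynomial.eval z) (contig k (A+B-(k:ℝ)+1) (A-(k:ℝ)+1) (by linarith))
  simp only [Polynomial.eval_mul, Polynomial.eval_add, Polynomial.eval_sub, Polynomial.eval_C,
    Polynomial.eval_X, Polynomial.eval_one] at E0
  have harg1 : A+B-(k:ℝ)+1-1 = A+B-((k+1:ℕ):ℝ)+1 := by push_cast; ring
  have harg2 : A-(k:ℝ)+1-1 = A-((k+1:ℕ):ℝ)+1 := by push_cast; ring
  rw [harg1, harg2] at E0
  have e1 : z ^ (A - (k:ℝ)) = z ^ (A - (k:ℝ) - 1) * z := by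
    conv_lhs => rw [show A-(k:ℝ) = (A-(k:ℝ)-1)+1 by ring]
    rw [Real.rpow_add_one hz0.ne']
  have e2 : ((1:ℝ)-z) ^ (B - (k:ℝ)) = ((1:ℝ)-z) ^ (B - (k:ℝ) - 1) * (1-z) := by
    conv_lhs => rw [show B-(k:ℝ) = (B-(k:ℝ)-1)+1 by ring]
    rw [Real.rpow_add_one hz1']
  have e3 : z ^ (A - ((k+1:ℕ):ℝ)) = z ^ (A - (k:ℝ) - 1) := by push_cast; ring_nf
  have e4 : ((1:ℝ)-z) ^ (B - ((k+1:ℕ):ℝ)) = ((1:ℝ)-z) ^ (B - (k:ℝ) - 1) := by push_cast; ring_nf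
  rw [Fk, e3, e4]
  simp only [Pi.mul_apply]
  rw [e1, e2]
  push_cast at E0 ⊢
  linear_combination (z ^ (A - (k:ℝ) - 1) * (((1:ℝ)-z) ^ (B - (k:ℝ) - 1))) * E0

lemma Fk_continuousOn (A B : ℝ) (k : ℕ) (hA : (k:ℝ) < A) (hB : (k:ℝ) < B) :
    ContinuousOn (Fk A B k) (Set.Icc 0 1) := by
  apply ContinuousOn.mul
  apply ContinuousOn.mul
  · intro z _
    exact (Real.continuousAt_rpow_const z _ (Or.inr (by linarith))).continuousWithinAt
  · intro z _
    exact ((Real.continuousAt_rpow_const (1-z) _ (Or.inr (by linarith))).comp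
      (by fun_prop)).continuousWithinAt
  · exact ((hypPoly _ _ _).continuous_aeval.continuousOn)

lemma Fk_zero (A B : ℝ) (k : ℕ) (hA : (k:ℝ) < A) : Fk A B k 0 = 0 := by
  rw [Fk, Real.zero_rpow (by linarith : A - (k:ℝ) ≠ 0)]; ring

lemma Fk_one (A B : ℝ) (k : ℕ) (hB : (k:ℝ) < B) : Fk A B k 1 = 0 := by
  rw [Fk]
  rw [show (1:ℝ)-1 = 0 by ring, Real.zero_rpow (by linarith : B - (k:ℝ) ≠ 0)]; ring


lemma rolle_step (A B : ℝ) (k : ℕ) (hA : (k:ℝ) < A) (hB : (k:ℝ) < B)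
    (S : Finset ℝ) (hcard : S.card = k) (hsub : ↑S ⊆ Set.Ioo (0:ℝ) 1)
    (hzero : ∀ x ∈ S, (hypPoly k (A+B-(k:ℝ)+1) (A-(k:ℝ)+1)).eval x = 0) :
    ∃ S' : Finset ℝ, S'.card = k+1 ∧ ↑S' ⊆ Set.Ioo (0:ℝ) 1 ∧
      ∀ x ∈ S', (hypPoly (k+1) (A+B-((k+1:ℕ):ℝ)+1) (A-((k+1:ℕ):ℝ)+1)).eval x = 0 := by
  have h0S : (0:ℝ) ∉ S := fun h => by simpa using (hsub h).1
  have h1S : (1:ℝ) ∉ S := fun h => by simpa using (hsub h).2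
  have hT0 : (0:ℝ) ∉ insert (1:ℝ) S := by
    simp only [Finset.mem_insert]; push_neg; exact ⟨by norm_num, h0S⟩
  set T : Finset ℝ := insert (0:ℝ) (insert 1 S) with hT
  have hTcard : T.card = k + 2 := by
    rw [hT, Finset.card_insert_of_notMem hT0, Finset.card_insert_of_notMem h1S, hcard]
  have hTmem : ∀ t ∈ T, 0 ≤ t ∧ t ≤ 1 := by
    intro t ht
    rw [hT] at ht
    simp only [Finset.mem_insert] at ht
    rcases ht with rfl | rfl | ht
    · norm_num
    · norm_num
    · exact ⟨(hsub ht).1.le, (hsub ht).2.le⟩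
  have hTzero : ∀ t ∈ T, Fk A B k t = 0 := by
    intro t ht
    rw [hT] at ht
    simp only [Finset.mem_insert] at ht
    rcases ht with rfl | rfl | ht
    · exact Fk_zero A B k hA
    · exact Fk_one A B k hB
    · rw [Fk, hzero t ht]; ring
  set e := T.orderIsoOfFin hTcard with he
  have emono : ∀ {i j : Fin (k+2)}, i < j → ((e i : ℝ)) < ((e j : ℝ)) := by
    intro i j hij
    exact_mod_cast e.strictMono hij
  have emono' : ∀ {i j : Fin (k+2)}, i ≤ j → ((e i : ℝ)) ≤ ((e j : ℝ)) := by
    intro i j hij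
    exact_mod_cast e.monotone hij
  have eT : ∀ i : Fin (k+2), ((e i : ℝ)) ∈ T := fun i => (e i).2
  have key : ∀ i : Fin (k+1), ∃ x,
      x ∈ Set.Ioo ((e i.castSucc : ℝ)) ((e i.succ : ℝ)) ∧
      (hypPoly (k+1) (A+B-((k+1:ℕ):ℝ)+1) (A-((k+1:ℕ):ℝ)+1)).eval x = 0 := by
    intro i
    have hab : ((e i.castSucc : ℝ)) < ((e i.succ : ℝ)) := emono (Fin.castSucc_lt_succ (i := i))
    have ha0 : 0 ≤ (e i.castSucc : ℝ) := (hTmem _ (eT _)).1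
    have hb1 : (e i.succ : ℝ) ≤ 1 := (hTmem _ (eT _)).2
    have hIoo : Set.Ioo ((e i.castSucc : ℝ)) ((e i.succ : ℝ)) ⊆ Set.Ioo (0:ℝ) 1 := by
      intro x hx; exact ⟨lt_of_le_of_lt ha0 hx.1, lt_of_lt_of_le hx.2 hb1⟩
    have hcont : ContinuousOn (Fk A B k) (Set.Icc ((e i.castSucc : ℝ)) ((e i.succ : ℝ))) :=
      (Fk_continuousOn A B k hA hB).mono (Set.Icc_subset_Icc ha0 hb1)
    have hfab : Fk A B k ((e i.castSucc : ℝ)) = Fk A B k ((e i.succ : ℝ)) := by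
      rw [hTzero _ (eT _), hTzero _ (eT _)]
    obtain ⟨c, hc, hc0⟩ := exists_hasDerivAt_eq_zero hab hcont hfab
      (fun x hx => Fk_hasDerivAt A B k hA (hIoo hx))
    refine ⟨c, hc, ?_⟩
    have hcI : c ∈ Set.Ioo (0:ℝ) 1 := hIoo hc
    have hAk : A - (k:ℝ) ≠ 0 := by linarith
    have hFk1 : Fk A B (k+1) c = 0 := by
      rcases mul_eq_zero.mp hc0 with h | h
      · exact absurd h hAk
      · exact h
    rw [Fk] at hFk1
    have hp1 : (0:ℝ) < c ^ (A - ((k+1:ℕ):ℝ)) := Real.rpow_pos_of_pos hcI.1 _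
    have hp2 : (0:ℝ) < (1-c) ^ (B - ((k+1:ℕ):ℝ)) := Real.rpow_pos_of_pos (by linarith [hcI.2]) _
    rcases mul_eq_zero.mp hFk1 with h | h
    · rcases mul_eq_zero.mp h with h' | h'
      · exact absurd h' (ne_of_gt hp1)
      · exact absurd h' (ne_of_gt hp2)
    · exact h
  choose c hc hcz using key
  have hcmono : StrictMono c := by
    intro i j hij
    have h1 : c i < (e i.succ : ℝ) := (hc i).2
    have h2 : (e j.castSucc : ℝ) < c j := (hc j).1
    have h3 : i.succ ≤ j.castSucc := by
      rw [Fin.le_def]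
      simp only [Fin.val_succ, Fin.coe_castSucc]
      omega
    have := emono' h3
    linarith
  refine ⟨Finset.image c Finset.univ, ?_, ?_, ?_⟩
  · rw [Finset.card_image_of_injective _ hcmono.injective, Finset.card_univ, Fintype.card_fin]
  · intro x hx
    simp only [Finset.coe_image, Set.mem_image] at hx
    obtain ⟨i, _, rfl⟩ := hx
    have ha0 : 0 ≤ (e i.castSucc : ℝ) := (hTmem _ (eT _)).1
    have hb1 : (e i.succ : ℝ) ≤ 1 := (hTmem _ (eT _)).2
    exact ⟨lt_of_le_of_lt ha0 (hc i).1, lt_of_lt_of_le (hc i).2 hb1⟩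
  · intro x hx
    simp only [Finset.mem_image] at hx
    obtain ⟨i, _, rfl⟩ := hx
    exact hcz i


/-- For `d > 0` and `b > d + n - 1`, the polynomial `₂F₁(-n, b; d; z)` has exactly `n`
zeros, all real, simple, and lying in the open interval `(0, 1)`:  viewed over `ℂ`, its
multiset of roots is exactly the image of a set of `n` distinct reals in `(0, 1)`. -/
theorem hyp_zeros_in_unit_interval (n : ℕ) (hn : 0 < n) (b d : ℝ)
    (hd : 0 < d) (hb : b > d + n - 1) :
    ∃ S : Finset ℝ, S.card = n ∧ (∀ x ∈ S, x ∈ Set.Ioo (0 : ℝ) 1) ∧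
      ((hypPoly n b d).map (algebraMap ℝ ℂ)).roots = S.val.map (fun x => (x : ℂ)) := by
  have hn1 : (1:ℝ) ≤ (n:ℝ) := by exact_mod_cast hn
  have claim : ∀ k : ℕ, k ≤ n → ∃ S : Finset ℝ, S.card = k ∧ ↑S ⊆ Set.Ioo (0:ℝ) 1 ∧
      ∀ x ∈ S, (hypPoly k ((d+(n:ℝ)-1)+(b-d)-(k:ℝ)+1) ((d+(n:ℝ)-1)-(k:ℝ)+1)).eval x = 0 := by
    intro k
    induction k with
    | zero => intro _; exact ⟨∅, by simp, by simp, by simp⟩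
    | succ k ih =>
      intro hk1
      obtain ⟨S, hcard, hsub, hzero⟩ := ih (Nat.le_of_succ_le hk1)
      have hkn : (k:ℝ) ≤ (n:ℝ) - 1 := by
        have : (k:ℝ) + 1 ≤ (n:ℝ) := by exact_mod_cast hk1
        linarith
      exact rolle_step (d+(n:ℝ)-1) (b-d) k (by linarith) (by linarith) S hcard hsub hzero
  obtain ⟨S, hcard, hsub, hzero⟩ := claim n le_rfl
  have hparam : hypPoly n ((d+(n:ℝ)-1)+(b-d)-(n:ℝ)+1) ((d+(n:ℝ)-1)-(n:ℝ)+1) = hypPoly n b d := by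
    rw [show (d+(n:ℝ)-1)+(b-d)-(n:ℝ)+1 = b by ring, show (d+(n:ℝ)-1)-(n:ℝ)+1 = d by ring]
  rw [hparam] at hzero
  -- degree facts
  have hbpos : (0:ℝ) < b := by linarith
  have hcoeffn : (hypPoly n b d).coeff n ≠ 0 := by
    rw [hypPoly_coeff']
    have h1 := poch_neg_nat_self_ne_zero n
    have h2 := poch_pos hbpos n
    have h3 := poch_pos hd n
    have h4 : (0:ℝ) < (Nat.factorial n : ℝ) := by positivity
    apply div_ne_zero (mul_ne_zero h1 (ne_of_gt h2)) (by positivity)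
  have hp0 : hypPoly n b d ≠ 0 := fun h => hcoeffn (by simp [h])
  have hdeg : (hypPoly n b d).natDegree = n := by
    apply le_antisymm
    · rw [Polynomial.natDegree_le_iff_coeff_eq_zero]
      intro m hm
      rw [hypPoly_coeff, if_neg (by omega)]
    · exact Polynomial.le_natDegree_of_ne_zero hcoeffn
  set q := (hypPoly n b d).map (algebraMap ℝ ℂ) with hq
  have hq0 : q ≠ 0 := by
    rw [hq, Polynomial.map_ne_zero_iff (algebraMap ℝ ℂ).injective]
    exact hp0
  have hqdeg : q.natDegree = n := by
    rw [hq, Polynomial.natDegree_map_eq_of_injective (algebraMap ℝ ℂ).injective, hdeg]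
  have hroots_card : q.roots.card = n := by
    rw [← hqdeg]
    exact (Polynomial.splits_iff_card_roots).mp
      (IsAlgClosed.splits _)
  set M : Multiset ℂ := S.val.map (fun x : ℝ => (x:ℂ)) with hM
  have hMnodup : M.Nodup := S.nodup.map (fun a b h => by exact_mod_cast h)
  have hMsub : M ⊆ q.roots := by
    intro z hz
    rw [hM, Multiset.mem_map] at hz
    obtain ⟨x, hxS, rfl⟩ := hz
    rw [Polynomial.mem_roots hq0]
    show Polynomial.eval _ q = 0
    rw [hq, Polynomial.eval_map, show ((x:ℂ)) = algebraMap ℝ ℂ x by simp,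
      Polynomial.eval₂_at_apply, hzero x hxS, map_zero]
  have hle : M ≤ q.roots := (Multiset.le_iff_subset hMnodup).mpr hMsub
  have hMcard : M.card = n := by rw [hM, Multiset.card_map]; exact hcard
  have hfin : q.roots = M := by
    apply (Multiset.eq_of_le_of_card_le hle ?_).symm
    rw [hroots_card, hMcard]
  refine ⟨S, hcard, fun x hx => hsub hx, ?_⟩
  convert hfin using 2
  simp [hM]
end

section
/- Let n be a positive integer and let b, d be real numbers with b < 1 - n and d > 0. Then the polynomial ₂F₁(-n, b; d; z) has exactly n zeros, all of which are real and simple and lie in the open interval (-∞, 0). -/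
namespace HypAux

open Polynomial Finset

lemma poch_zero (x : ℝ) : poch x 0 = 1 := by simp [poch]

lemma poch_succ (x : ℝ) (k : ℕ) : poch x (k+1) = poch x k * (x + k) := by
  simp [poch, Finset.prod_range_succ]

lemma poch_succ' (x : ℝ) (k : ℕ) : poch x (k+1) = x * poch (x+1) k := by
  simp [poch, Finset.prod_range_succ']
  rw [mul_comm]
  congr 1
  apply Finset.prod_congr rfl
  intro i _
  ring

lemma poch_pos {x : ℝ} (hx : 0 < x) (k : ℕ) : 0 < poch x k := by
  apply Finset.prod_pos
  intro i _
  positivity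

lemma poch_alt_pos {x : ℝ} {k : ℕ} (h : ∀ i : ℕ, i < k → x + i < 0) :
    0 < (-1)^k * poch x k := by
  induction k with
  | zero => simp [poch_zero]
  | succ k ih =>
    have h1 : 0 < (-1)^k * poch x k := ih (fun i hi => h i (Nat.lt_succ_of_lt hi))
    have h2 : x + k < 0 := h k (Nat.lt_succ_self k)
    have : (-1:ℝ)^(k+1) * poch x (k+1) = ((-1)^k * poch x k) * (-(x + k)) := by
      rw [poch_succ]; ring
    rw [this]
    have : 0 < -(x + (k:ℝ)) := by linarith
    positivity

lemma poch_neg_nat {n k : ℕ} (h : n < k) : poch (-(n:ℝ)) k = 0 := by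
  apply Finset.prod_eq_zero (Finset.mem_range.mpr h)
  simp

/-- The coefficient sequence of `hypPoly`. -/
noncomputable def a (n : ℕ) (b d : ℝ) (k : ℕ) : ℝ :=
  poch (-(n:ℝ)) k * poch b k / (poch d k * (Nat.factorial k))

lemma a_zero (n : ℕ) (b d : ℝ) : a n b d 0 = 1 := by simp [a, poch_zero]

lemma a_eq_zero {n k : ℕ} (b d : ℝ) (h : n < k) : a n b d k = 0 := by
  simp [a, poch_neg_nat h]

lemma hypPoly_coeff (n : ℕ) (b d : ℝ) (k : ℕ) :
    (hypPoly n b d).coeff k = a n b d k := by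
  rw [hypPoly, Polynomial.finset_sum_coeff]
  simp only [Polynomial.coeff_C_mul, Polynomial.coeff_X_pow, mul_ite, mul_one, mul_zero]
  rw [Finset.sum_ite_eq (Finset.range (n+1)) k]
  by_cases h : k ∈ Finset.range (n+1)
  · simp [h, a]
  · simp only [Finset.mem_range, not_lt] at h
    rw [if_neg (by simp [Finset.mem_range]; omega)]
    exact (a_eq_zero b d (by omega : n < k)).symm

lemma a_pos {n : ℕ} {b d : ℝ} (hb : b < 1 - n) (hd : 0 < d) {k : ℕ} (hk : k ≤ n) :
    0 < a n b d k := by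
  have h1 : 0 < (-1:ℝ)^k * poch (-(n:ℝ)) k := by
    apply poch_alt_pos
    intro i hi
    have : (i:ℝ) < n := by exact_mod_cast lt_of_lt_of_le hi hk
    linarith
  have h2 : 0 < (-1:ℝ)^k * poch b k := by
    apply poch_alt_pos
    intro i hi
    have : (i:ℝ) + 1 ≤ n := by exact_mod_cast (by omega : i + 1 ≤ n)
    linarith
  have h3 : 0 < poch d k := poch_pos hd k
  have h4 : 0 < (Nat.factorial k : ℝ) := by exact_mod_cast Nat.factorial_pos k
  have key : poch (-(n:ℝ)) k * poch b k
      = ((-1:ℝ)^k * poch (-(n:ℝ)) k) * ((-1:ℝ)^k * poch b k) := by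
    have : (-1:ℝ)^k * (-1:ℝ)^k = 1 := by rw [← mul_pow]; norm_num
    calc poch (-(n:ℝ)) k * poch b k
        = ((-1:ℝ)^k * (-1:ℝ)^k) * (poch (-(n:ℝ)) k * poch b k) := by rw [this]; ring
      _ = ((-1:ℝ)^k * poch (-(n:ℝ)) k) * ((-1:ℝ)^k * poch b k) := by ring
  rw [a, key]
  positivity

lemma hypPoly_natDegree {n : ℕ} {b d : ℝ} (hb : b < 1 - n) (hd : 0 < d) :
    (hypPoly n b d).natDegree = n := by
  apply le_antisymm
  · rw [Polynomial.natDegree_le_iff_coeff_eq_zero]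
    intro m hm
    rw [hypPoly_coeff]
    exact a_eq_zero b d hm
  · apply Polynomial.le_natDegree_of_ne_zero
    rw [hypPoly_coeff]
    exact ne_of_gt (a_pos hb hd le_rfl)

lemma hypPoly_leadingCoeff_pos {n : ℕ} {b d : ℝ} (hb : b < 1 - n) (hd : 0 < d) :
    0 < (hypPoly n b d).leadingCoeff := by
  rw [Polynomial.leadingCoeff, hypPoly_natDegree hb hd, hypPoly_coeff]
  exact a_pos hb hd le_rfl

lemma hypPoly_ne_zero {n : ℕ} {b d : ℝ} (hb : b < 1 - n) (hd : 0 < d) :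
    hypPoly n b d ≠ 0 :=
  Polynomial.leadingCoeff_ne_zero.mp (ne_of_gt (hypPoly_leadingCoeff_pos hb hd))

lemma hypPoly_eval_zero (n : ℕ) (b d : ℝ) : (hypPoly n b d).eval 0 = 1 := by
  rw [← Polynomial.coeff_zero_eq_eval_zero, hypPoly_coeff, a_zero]

lemma factorial_ne (k : ℕ) : (Nat.factorial k : ℝ) ≠ 0 := by
  exact_mod_cast (Nat.factorial_pos k).ne'

lemma a_ratio (n : ℕ) {d : ℝ} (b : ℝ) (hd : 0 < d) (k : ℕ) :
    ((k:ℝ)+1) * ((k:ℝ) + d) * a n b d (k+1) = ((k:ℝ) - n) * ((k:ℝ) + b) * a n b d k := by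
  have h1 : poch d k ≠ 0 := (poch_pos hd k).ne'
  have h2 : (d + k) ≠ 0 := by positivity
  have h3 : ((k:ℝ) + 1) ≠ 0 := by positivity
  simp only [a, poch_succ, Nat.factorial_succ]
  push_cast
  field_simp
  ring

lemma hypPoly_derivative (n : ℕ) (b : ℝ) {d : ℝ} (hd : 0 < d) :
    Polynomial.derivative (hypPoly (n+1) b d)
      = Polynomial.C (((n:ℝ)+1) * (-b) / d) * hypPoly n (b+1) (d+1) := by
  ext k
  rw [Polynomial.coeff_derivative, Polynomial.coeff_C_mul, hypPoly_coeff, hypPoly_coeff]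
  have e1 : (-((n:ℝ)+1)) + 1 = -(n:ℝ) := by ring
  have e2 : (↑(n+1) : ℝ) = (n:ℝ) + 1 := by push_cast; ring
  simp only [a, e2, poch_succ' (-((n:ℝ)+1)) k, poch_succ' b k, poch_succ' d k, e1,
    Nat.factorial_succ]
  have h1 : poch (d+1) k ≠ 0 := (poch_pos (by linarith) k).ne'
  have h3 : ((k:ℝ) + 1) ≠ 0 := by positivity
  push_cast
  field_simp

lemma hypPoly_ode (n : ℕ) (b : ℝ) {d : ℝ} (hd : 0 < d) :
    Polynomial.X * (1 - Polynomial.X)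
        * Polynomial.derivative (Polynomial.derivative (hypPoly n b d))
      + (Polynomial.C d - Polynomial.C (b - n + 1) * Polynomial.X)
        * Polynomial.derivative (hypPoly n b d)
      + Polynomial.C ((n:ℝ) * b) * hypPoly n b d = 0 := by
  set P := hypPoly n b d with hP
  have hc : ∀ j : ℕ, P.coeff j = a n b d j := hypPoly_coeff n b d
  have hc' : ∀ j : ℕ, (Polynomial.derivative P).coeff j = a n b d (j+1) * ((j:ℝ)+1) := by
    intro j; rw [Polynomial.coeff_derivative, hc]
  have hc'' : ∀ j : ℕ, (Polynomial.derivative (Polynomial.derivative P)).coeff j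
      = a n b d (j+2) * ((j:ℝ)+2) * ((j:ℝ)+1) := by
    intro j; rw [Polynomial.coeff_derivative, hc']; push_cast; ring
  have expand : Polynomial.X * (1 - Polynomial.X)
        * Polynomial.derivative (Polynomial.derivative P)
      = Polynomial.X * (Polynomial.derivative (Polynomial.derivative P))
        - Polynomial.X * (Polynomial.X * Polynomial.derivative (Polynomial.derivative P)) := by
    ring
  have hsub : ∀ j : ℕ, ((Polynomial.C d - Polynomial.C (b - (n:ℝ) + 1) * Polynomial.X)
      * Polynomial.derivative P).coeff j
      = d * (Polynomial.derivative P).coeff j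
        - (b - (n:ℝ) + 1) * ((Polynomial.X * Polynomial.derivative P).coeff j) := by
    intro j
    rw [sub_mul, Polynomial.coeff_sub, Polynomial.coeff_C_mul,
      mul_assoc, Polynomial.coeff_C_mul]
  ext k
  rw [expand, Polynomial.coeff_add, Polynomial.coeff_add, Polynomial.coeff_sub, hsub k,
    Polynomial.coeff_C_mul, hc k, Polynomial.coeff_zero]
  match k with
  | 0 =>
    have e1 : ((Polynomial.X : Polynomial ℝ) * Polynomial.derivative (Polynomial.derivative P)).coeff 0 = 0 := by
      rw [Polynomial.mul_coeff_zero, Polynomial.coeff_X_zero, zero_mul]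
    have e2 : ((Polynomial.X : Polynomial ℝ) * (Polynomial.X * Polynomial.derivative (Polynomial.derivative P))).coeff 0 = 0 := by
      rw [Polynomial.mul_coeff_zero, Polynomial.coeff_X_zero, zero_mul]
    have e3 : ((Polynomial.X : Polynomial ℝ) * Polynomial.derivative P).coeff 0 = 0 := by
      rw [Polynomial.mul_coeff_zero, Polynomial.coeff_X_zero, zero_mul]
    rw [e1, e2, e3, hc' 0]
    have h := a_ratio n b hd 0
    push_cast at h ⊢
    nlinarith [h]
  | 1 =>
    rw [Polynomial.coeff_X_mul, Polynomial.coeff_X_mul, Polynomial.coeff_X_mul,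
      show ((Polynomial.X : Polynomial ℝ) * Polynomial.derivative (Polynomial.derivative P)).coeff 0 = 0 from by
        rw [Polynomial.mul_coeff_zero, Polynomial.coeff_X_zero, zero_mul],
      hc'' 0, hc' 1, hc' 0]
    have h := a_ratio n b hd 1
    push_cast at h ⊢
    nlinarith [h]
  | (k+2) =>
    rw [Polynomial.coeff_X_mul, Polynomial.coeff_X_mul, Polynomial.coeff_X_mul,
      Polynomial.coeff_X_mul, hc'' (k+1), hc'' k, hc' (k+2), hc' (k+1)]
    have h := a_ratio n b hd (k+2)
    push_cast at h ⊢
    nlinarith [h]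

open Polynomial Filter in
lemma prod_sign (S : Finset ℝ) (t : ℝ) (ht : t ∉ S) :
    0 < (-1:ℝ)^((S.filter (fun x => t < x)).card) * ∏ x ∈ S, (t - x) := by
  classical
  induction S using Finset.induction_on with
  | empty => simp
  | @insert u S' hu ih =>
    have hta : t ≠ u := fun h => (by simp [h] at ht : False)
    have htS : t ∉ S' := fun h => ht (Finset.mem_insert_of_mem h)
    have key := ih htS
    rw [Finset.filter_insert, Finset.prod_insert hu]
    by_cases hlt : t < u
    · rw [if_pos hlt, Finset.card_insert_of_notMem (fun h => hu (Finset.mem_of_mem_filter u h))]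
      have : (-1:ℝ)^((S'.filter (fun x => t < x)).card + 1) * ((t - u) * ∏ x ∈ S', (t - x))
          = ((u - t)) * ((-1:ℝ)^((S'.filter (fun x => t < x)).card) * ∏ x ∈ S', (t - x)) := by
        rw [pow_succ]; ring
      rw [this]
      have hat : 0 < u - t := by linarith
      exact mul_pos hat key
    · rw [if_neg hlt]
      have hat : 0 < t - u := by
        rcases lt_trichotomy t u with h|h|h
        · exact absurd h hlt
        · exact absurd h hta
        · linarith
      have : (-1:ℝ)^((S'.filter (fun x => t < x)).card) * ((t - u) * ∏ x ∈ S', (t - x))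
          = (t - u) * ((-1:ℝ)^((S'.filter (fun x => t < x)).card) * ∏ x ∈ S', (t - x)) := by
        ring
      rw [this]
      exact mul_pos hat key

open Polynomial in
lemma sign_eval {p : Polynomial ℝ} {S : Finset ℝ} (h : p.roots = S.val)
    (hcard : S.card = p.natDegree) (hlead : 0 < p.leadingCoeff) {t : ℝ} (ht : t ∉ S) :
    0 < (-1:ℝ)^((S.filter (fun x => t < x)).card) * p.eval t := by
  classical
  have hroots_card : Multiset.card p.roots = p.natDegree := by
    rw [h]; exact hcard
  have fact := Polynomial.C_leadingCoeff_mul_prod_multiset_X_sub_C hroots_card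
  have heval : p.eval t = p.leadingCoeff * ∏ x ∈ S, (t - x) := by
    conv_lhs => rw [← fact]
    rw [Polynomial.eval_mul, Polynomial.eval_C, h, Polynomial.eval_multiset_prod,
      Multiset.map_map, Finset.prod_eq_multiset_prod]
    congr 1
    congr 1
    apply Multiset.map_congr rfl
    intro x _
    simp [Function.comp]
  rw [heval]
  have key := prod_sign S t ht
  have : (-1:ℝ)^((S.filter (fun x => t < x)).card) * (p.leadingCoeff * ∏ x ∈ S, (t - x))
      = p.leadingCoeff * ((-1:ℝ)^((S.filter (fun x => t < x)).card) * ∏ x ∈ S, (t - x)) := by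
    ring
  rw [this]
  exact mul_pos hlead key

open Polynomial Filter in
lemma eventually_sign_atBot {p : Polynomial ℝ} (hdeg : 0 < p.natDegree)
    (hlead : 0 < p.leadingCoeff) :
    ∀ᶠ t in Filter.atBot, 0 < (-1:ℝ)^(p.natDegree) * p.eval t := by
  set N := p.natDegree with hN
  set q : Polynomial ℝ := Polynomial.C ((-1:ℝ)^N) * p.comp (-Polynomial.X) with hq
  have hp0 : p ≠ 0 := by
    intro h
    rw [hN, h, Polynomial.natDegree_zero] at hdeg
    exact lt_irrefl 0 hdeg
  have hnegX : (-Polynomial.X : Polynomial ℝ).natDegree = 1 := by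
    rw [Polynomial.natDegree_neg, Polynomial.natDegree_X]
  have hcompdeg : (p.comp (-Polynomial.X)).natDegree = N := by
    rw [Polynomial.natDegree_comp, hnegX, mul_one]
  have hqdeg : q.natDegree = N := by
    rw [hq, Polynomial.natDegree_C_mul (by positivity : ((-1:ℝ)^N) ≠ 0), hcompdeg]
  have hleadcomp : (p.comp (-Polynomial.X)).leadingCoeff = p.leadingCoeff * (-1)^N := by
    rw [Polynomial.leadingCoeff_comp (by rw [hnegX]; norm_num)]
    congr 1
    rw [Polynomial.leadingCoeff_neg, Polynomial.leadingCoeff_X]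
  have hqlead : q.leadingCoeff = p.leadingCoeff := by
    rw [hq, Polynomial.leadingCoeff_mul, Polynomial.leadingCoeff_C, hleadcomp]
    have : (-1:ℝ)^N * (-1:ℝ)^N = 1 := by rw [← mul_pow]; norm_num
    calc (-1:ℝ)^N * (p.leadingCoeff * (-1)^N) = ((-1:ℝ)^N * (-1:ℝ)^N) * p.leadingCoeff := by ring
      _ = p.leadingCoeff := by rw [this, one_mul]
  have hqdegpos : 0 < q.degree := by
    have h2 : 0 < q.natDegree := by rw [hqdeg]; exact hdeg
    exact Polynomial.natDegree_pos_iff_degree_pos.mp h2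
  have htt := Polynomial.tendsto_atTop_of_leadingCoeff_nonneg q hqdegpos
    (by rw [hqlead]; exact hlead.le)
  have ev : ∀ᶠ x in Filter.atTop, 0 < Polynomial.eval x q :=
    htt.eventually (Filter.eventually_gt_atTop 0)
  have hevalq : ∀ x : ℝ, Polynomial.eval x q = (-1:ℝ)^N * Polynomial.eval (-x) p := by
    intro x
    rw [hq]
    simp [Polynomial.eval_comp]
  have hneg : Filter.Tendsto (fun t : ℝ => -t) Filter.atBot Filter.atTop :=
    tendsto_neg_atBot_atTop
  filter_upwards [hneg.eventually ev] with t ht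
  rw [hevalq, neg_neg] at ht
  exact ht

open Polynomial in
lemma alt_signs_roots (p : Polynomial ℝ) (N : ℕ) (hdeg : p.natDegree = N) (hp : p ≠ 0)
    (e : Fin (N+1) → ℝ) (he : StrictMono e)
    (hs : ∀ j : Fin (N+1), 0 < (-1:ℝ)^(N - (j:ℕ)) * p.eval (e j)) :
    ∃ S : Finset ℝ, S.card = N ∧ (∀ x ∈ S, e 0 < x ∧ x < e (Fin.last N)) ∧
      p.roots = S.val := by
  classical
  have hroot : ∀ j : Fin N, ∃ x, x ∈ Set.Ioo (e j.castSucc) (e j.succ) ∧ p.eval x = 0 := by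
    intro j
    have h1 := hs j.castSucc
    have h2 := hs j.succ
    have hjlt : (j:ℕ) < N := j.isLt
    have hexp : N - (j:ℕ) = (N - ((j:ℕ)+1)) + 1 := by omega
    have hc1 : ((j.castSucc : Fin (N+1)) : ℕ) = (j:ℕ) := rfl
    have hc2 : ((j.succ : Fin (N+1)) : ℕ) = (j:ℕ) + 1 := rfl
    rw [hc1, hexp, pow_succ] at h1
    rw [hc2] at h2
    set m := N - ((j:ℕ)+1) with hm
    have hab : e j.castSucc ≤ e j.succ := (he (Fin.castSucc_lt_succ (i := j))).le
    have hcont : ContinuousOn (fun x => p.eval x) (Set.Icc (e j.castSucc) (e j.succ)) :=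
      (Polynomial.continuous p).continuousOn
    rcases Nat.even_or_odd m with hev | hod
    · have hm1 : (-1:ℝ)^m = 1 := hev.neg_one_pow
      rw [hm1] at h1 h2
      have ha' : p.eval (e j.castSucc) < 0 := by nlinarith [h1]
      have hb' : 0 < p.eval (e j.succ) := by nlinarith [h2]
      have := intermediate_value_Ioo hab hcont (Set.mem_Ioo.mpr ⟨ha', hb'⟩)
      obtain ⟨x, hx, hx0⟩ := this
      exact ⟨x, hx, hx0⟩
    · have hm1 : (-1:ℝ)^m = -1 := hod.neg_one_pow
      rw [hm1] at h1 h2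
      have ha' : 0 < p.eval (e j.castSucc) := by nlinarith [h1]
      have hb' : p.eval (e j.succ) < 0 := by nlinarith [h2]
      have := intermediate_value_Ioo' hab hcont (Set.mem_Ioo.mpr ⟨hb', ha'⟩)
      obtain ⟨x, hx, hx0⟩ := this
      exact ⟨x, hx, hx0⟩
  choose x hx1 hx2 using hroot
  have hxmono : StrictMono x := by
    intro i j hij
    have h1 : x i < e i.succ := (hx1 i).2
    have h2 : e j.castSucc < x j := (hx1 j).1
    have h3 : e i.succ ≤ e j.castSucc := by
      apply he.monotone
      rw [Fin.le_def]
      simpa using hij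
    linarith
  have hxinj : Function.Injective x := hxmono.injective
  refine ⟨Finset.image x Finset.univ, ?_, ?_, ?_⟩
  · rw [Finset.card_image_of_injective _ hxinj, Finset.card_univ, Fintype.card_fin]
  · intro y hy
    obtain ⟨j, _, rfl⟩ := Finset.mem_image.mp hy
    constructor
    · exact lt_of_le_of_lt (he.monotone (Fin.zero_le _)) (hx1 j).1
    · exact lt_of_lt_of_le (hx1 j).2 (he.monotone (Fin.le_last _))
  · have hle : (Finset.image x Finset.univ).val ≤ p.roots := by
      rw [Multiset.le_iff_count]
      intro y
      by_cases hy : y ∈ Finset.image x Finset.univ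
      · have h1 : (Finset.image x Finset.univ).val.count y = 1 :=
          Multiset.count_eq_one_of_mem (Finset.image x Finset.univ).nodup hy
        rw [h1, Polynomial.count_roots]
        obtain ⟨j, _, rfl⟩ := Finset.mem_image.mp hy
        exact (Polynomial.rootMultiplicity_pos hp).mpr (hx2 j)
      · rw [Multiset.count_eq_zero_of_notMem (fun h => hy h)]
        exact Nat.zero_le _
    have hcard : Multiset.card p.roots ≤ Multiset.card (Finset.image x Finset.univ).val := by
      calc Multiset.card p.roots ≤ p.natDegree := Polynomial.card_roots' p
        _ = N := hdeg
        _ = (Finset.image x Finset.univ).card := by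
            rw [Finset.card_image_of_injective _ hxinj, Finset.card_univ, Fintype.card_fin]
    exact (Multiset.eq_of_le_of_card_le hle hcard).symm

lemma card_filter_le_fin (m i : ℕ) (him : i ≤ m) :
    (Finset.univ.filter (fun j : Fin m => i ≤ (j:ℕ))).card = m - i := by
  classical
  have hbij : (Finset.univ.filter (fun j : Fin m => i ≤ (j:ℕ))).card
      = ((Finset.range m).filter (fun j => i ≤ j)).card := by
    refine Finset.card_bij (fun j _ => (j : ℕ)) ?_ ?_ ?_
    · intro j hj
      simp only [Finset.mem_filter, Finset.mem_range]
      exact ⟨j.isLt, (Finset.mem_filter.mp hj).2⟩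
    · intro j1 _ j2 _ h
      exact Fin.ext h
    · intro j hj
      simp only [Finset.mem_filter, Finset.mem_range] at hj
      exact ⟨⟨j, hj.1⟩, Finset.mem_filter.mpr ⟨Finset.mem_univ _, hj.2⟩, rfl⟩
  rw [hbij]
  have : (Finset.range m).filter (fun j => i ≤ j) = Finset.range m \ Finset.range i := by
    ext a
    simp only [Finset.mem_filter, Finset.mem_range, Finset.mem_sdiff]
    omega
  rw [this, Finset.card_sdiff_of_subset (Finset.range_subset_range.mpr him)]
  simp

open Polynomial in
lemma good (n : ℕ) : ∀ b d : ℝ, b < 1 - n → 0 < d →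
    ∃ S : Finset ℝ, S.card = n ∧ (∀ x ∈ S, x < 0) ∧ (hypPoly n b d).roots = S.val := by
  classical
  induction n using Nat.strong_induction_on with
  | _ n ih =>
    match n with
    | 0 =>
      intro b d hb hd
      refine ⟨∅, rfl, by simp, ?_⟩
      have h1 : hypPoly 0 b d = Polynomial.C 1 := by
        simp [hypPoly, poch]
      rw [h1]
      simp
    | 1 =>
      intro b d hb hd
      have hb' : b < 1 - (1:ℕ) := hb
      have hdeg : (hypPoly 1 b d).natDegree = 1 := hypPoly_natDegree hb hd
      have hlead := hypPoly_leadingCoeff_pos hb hd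
      have hne := hypPoly_ne_zero hb hd
      have hev := eventually_sign_atBot (p := hypPoly 1 b d) (by rw [hdeg]; norm_num) hlead
      have hT : ∃ T : ℝ, (0 < (-1:ℝ)^((hypPoly 1 b d).natDegree) * (hypPoly 1 b d).eval T)
          ∧ T < 0 := by
        have := hev.and (Filter.eventually_lt_atBot (0:ℝ))
        exact this.exists
      obtain ⟨T, hT1, hT2⟩ := hT
      rw [hdeg] at hT1
      set e : Fin 2 → ℝ := ![T, 0] with he
      have hemono : StrictMono e := by
        rw [Fin.strictMono_iff_lt_succ]
        intro i
        fin_cases i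
        simpa [he] using hT2
      have hsigns : ∀ j : Fin 2, 0 < (-1:ℝ)^(1 - (j:ℕ)) * (hypPoly 1 b d).eval (e j) := by
        intro j
        fin_cases j
        · simpa [he] using hT1
        · simp [he, hypPoly_eval_zero]
      obtain ⟨S, hScard, hSmem, hSroots⟩ :=
        alt_signs_roots (hypPoly 1 b d) 1 hdeg hne e hemono hsigns
      refine ⟨S, hScard, ?_, hSroots⟩
      intro x hx
      have := (hSmem x hx).2
      simpa [he, Fin.last] using this
    | (m+2) =>
      intro b d hb hd
      -- parameters for q and r
      have hbq : b + 1 < 1 - ((m+1:ℕ):ℝ) := by push_cast at hb ⊢; linarith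
      have hdq : (0:ℝ) < d + 1 := by linarith
      have hbr : b + 2 < 1 - ((m:ℕ):ℝ) := by push_cast at hb ⊢; linarith
      have hdr : (0:ℝ) < d + 2 := by linarith
      set p := hypPoly (m+2) b d with hp
      set q := hypPoly (m+1) (b+1) (d+1) with hq
      set r := hypPoly m (b+2) (d+2) with hr
      have hbneg : b < 0 := by push_cast at hb; linarith
      have hb1neg : b + 1 < 0 := by push_cast at hbq; linarith
      -- derivative identities
      have hp' : Polynomial.derivative p = Polynomial.C (((((m+1:ℕ)):ℝ)+1) * (-b) / d) * q := by
        exact hypPoly_derivative (m+1) b hd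
      set c1 : ℝ := ((((m+1:ℕ)):ℝ)+1) * (-b) / d with hc1def
      set c2 : ℝ := (((m:ℕ):ℝ)+1) * (-(b+1)) / (d+1) with hc2def
      have hq' : Polynomial.derivative q = Polynomial.C c2 * r := by
        have h0 := hypPoly_derivative m (b+1) hdq
        rw [show (b+1)+1 = b+2 from by ring, show (d+1)+1 = d+2 from by ring] at h0
        exact h0
      have hc1 : 0 < c1 := by
        rw [hc1def]
        apply div_pos _ hd
        apply mul_pos _ (by linarith : (0:ℝ) < -b)
        positivity
      have hc2 : 0 < c2 := by
        rw [hc2def]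
        apply div_pos _ hdq
        apply mul_pos _ (by linarith : (0:ℝ) < -(b+1))
        positivity
      obtain ⟨Sq, hSqcard, hSqneg, hSqroots⟩ := ih (m+1) (by omega) (b+1) (d+1) hbq hdq
      obtain ⟨Sr, hSrcard, hSrneg, hSrroots⟩ := ih m (by omega) (b+2) (d+2) hbr hdr
      have hqdeg : q.natDegree = m+1 := hypPoly_natDegree hbq hdq
      have hqne : q ≠ 0 := hypPoly_ne_zero hbq hdq
      have hrdeg : r.natDegree = m := hypPoly_natDegree hbr hdr
      have hrlead : 0 < r.leadingCoeff := hypPoly_leadingCoeff_pos hbr hdr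
      have hrne : r ≠ 0 := hypPoly_ne_zero hbr hdr
      have hpdeg : p.natDegree = m+2 := hypPoly_natDegree hb hd
      have hplead : 0 < p.leadingCoeff := hypPoly_leadingCoeff_pos hb hd
      have hpne : p ≠ 0 := hypPoly_ne_zero hb hd
      -- enumerate the roots of q
      set y : Fin (m+1) → ℝ := fun i => Sq.orderEmbOfFin hSqcard i with hy
      have ymono : StrictMono y := (Sq.orderEmbOfFin hSqcard).strictMono
      have ymem : ∀ i, y i ∈ Sq := fun i => Finset.orderEmbOfFin_mem Sq hSqcard i
      have yneg : ∀ i, y i < 0 := fun i => hSqneg _ (ymem i)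
      have yroot : ∀ i, q.eval (y i) = 0 := by
        intro i
        have h1 : y i ∈ q.roots := by
          rw [hSqroots]
          exact Finset.mem_val.mpr (ymem i)
        exact (Polynomial.mem_roots'.mp h1).2
      -- Rolle: roots of r between consecutive roots of q
      have hz : ∀ j : Fin m, ∃ zz, zz ∈ Set.Ioo (y j.castSucc) (y j.succ)
          ∧ r.eval zz = 0 := by
        intro j
        have hlt : y j.castSucc < y j.succ := ymono (Fin.castSucc_lt_succ (i := j))
        obtain ⟨c, hc, hderiv⟩ := exists_deriv_eq_zero hlt
          ((Polynomial.continuous q).continuousOn)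
          (by rw [yroot, yroot])
        rw [Polynomial.deriv, hq', Polynomial.eval_mul, Polynomial.eval_C] at hderiv
        exact ⟨c, hc, by
          rcases mul_eq_zero.mp hderiv with h|h
          · exact absurd h hc2.ne'
          · exact h⟩
      choose z hz1 hz2 using hz
      have zmono : StrictMono z := by
        intro i j hij
        have h1 : z i < y i.succ := (hz1 i).2
        have h2 : y j.castSucc < z j := (hz1 j).1
        have h3 : y i.succ ≤ y j.castSucc := by
          apply ymono.monotone
          rw [Fin.le_def]
          simpa using hij
        linarith
      have zinj : Function.Injective z := zmono.injective
      have zmem : ∀ j, z j ∈ Sr := by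
        intro j
        have h1 : z j ∈ r.roots := Polynomial.mem_roots'.mpr ⟨hrne, hz2 j⟩
        rw [hSrroots] at h1
        exact Finset.mem_val.mp h1
      have himage : Finset.image z Finset.univ = Sr := by
        apply Finset.eq_of_subset_of_card_le
        · intro a ha
          obtain ⟨j, _, rfl⟩ := Finset.mem_image.mp ha
          exact zmem j
        · rw [hSrcard, Finset.card_image_of_injective _ zinj, Finset.card_univ,
            Fintype.card_fin]
      have hyz : ∀ (i : Fin (m+1)) (j : Fin m), y i < z j ↔ (i:ℕ) ≤ (j:ℕ) := by
        intro i j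
        constructor
        · intro h
          by_contra hcon
          push_neg at hcon
          have h2 : y j.succ ≤ y i := by
            apply ymono.monotone
            rw [Fin.le_def]
            simpa using hcon
          have := (hz1 j).2
          linarith
        · intro h
          have h2 : y i ≤ y j.castSucc := by
            apply ymono.monotone
            rw [Fin.le_def]
            simpa using h
          have := (hz1 j).1
          linarith
      have hynot : ∀ i : Fin (m+1), y i ∉ Sr := by
        intro i hmem
        rw [← himage] at hmem
        obtain ⟨j, _, hje⟩ := Finset.mem_image.mp hmem
        by_cases hij : (i:ℕ) ≤ (j:ℕ)
        · have := (hyz i j).mpr hij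
          rw [hje] at this
          exact lt_irrefl _ this
        · push_neg at hij
          have h2 : y j.succ ≤ y i := by
            apply ymono.monotone
            rw [Fin.le_def]
            simpa using hij
          have := (hz1 j).2
          rw [hje] at this
          linarith
      have hfilter : ∀ i : Fin (m+1), (Sr.filter (fun x => y i < x)).card = m - (i:ℕ) := by
        intro i
        rw [← himage, Finset.filter_image]
        rw [Finset.card_image_of_injective _ zinj]
        have heq : (Finset.univ.filter fun j : Fin m => y i < z j)
            = Finset.univ.filter (fun j : Fin m => (i:ℕ) ≤ (j:ℕ)) := by
          apply Finset.filter_congr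
          intro j _
          exact hyz i j
        rw [heq, card_filter_le_fin m (i:ℕ) (by omega : (i:ℕ) ≤ m)]
      have hsr : ∀ i : Fin (m+1), 0 < (-1:ℝ)^(m - (i:ℕ)) * r.eval (y i) := by
        intro i
        have h0 := sign_eval hSrroots (by rw [hrdeg, hSrcard]) hrlead (hynot i)
        rwa [hfilter i] at h0
      -- ODE evaluation at the roots of q
      have hkey : ∀ i : Fin (m+1),
          (y i)*(1 - y i) * (c1*(c2*(r.eval (y i)))) + (((m+2:ℕ)):ℝ) * b * (p.eval (y i)) = 0 := by
        intro i
        have hode := hypPoly_ode (m+2) b hd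
        have h0 := congrArg (Polynomial.eval (y i)) hode
        have hpev1 : (Polynomial.derivative p).eval (y i) = 0 := by
          rw [hp', Polynomial.eval_mul, Polynomial.eval_C, yroot i, mul_zero]
        have hpev2 : (Polynomial.derivative (Polynomial.derivative p)).eval (y i)
            = c1 * (c2 * (r.eval (y i))) := by
          rw [hp', Polynomial.derivative_C_mul, hq', Polynomial.eval_mul, Polynomial.eval_C,
            Polynomial.eval_mul, Polynomial.eval_C]
        rw [← hp] at h0
        simp only [Polynomial.eval_add, Polynomial.eval_mul, Polynomial.eval_sub,
          Polynomial.eval_one, Polynomial.eval_X, Polynomial.eval_C, Polynomial.eval_zero,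
          hpev1, hpev2, mul_zero, add_zero] at h0
        linarith [h0]
      -- the far-left sample point
      have hev := eventually_sign_atBot (p := p) (by rw [hpdeg]; omega) hplead
      obtain ⟨T, hT1, hT2⟩ := (hev.and (Filter.eventually_lt_atBot (y 0))).exists
      rw [hpdeg] at hT1
      -- endpoints
      set e : Fin (m+3) → ℝ := Fin.cons T (Fin.snoc (fun i => y i) (0:ℝ)) with he
      have helast : e (Fin.last (m+2)) = 0 := by
        rw [he, show (Fin.last (m+2)) = (Fin.last (m+1)).succ from (Fin.succ_last _).symm,
          Fin.cons_succ, Fin.snoc_last]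
      have hemono : StrictMono e := by
        rw [Fin.strictMono_iff_lt_succ]
        intro i
        refine Fin.cases ?_ ?_ i
        · rw [he, Fin.castSucc_zero, Fin.cons_zero,
            show (Fin.succ 0 : Fin (m+3)) = Fin.succ (0 : Fin (m+2)) from rfl,
            Fin.cons_succ,
            show (0 : Fin (m+2)) = Fin.castSucc (0 : Fin (m+1)) from rfl,
            Fin.snoc_castSucc]
          exact hT2
        · intro k
          rw [he, ← Fin.succ_castSucc, Fin.cons_succ, Fin.cons_succ, Fin.snoc_castSucc]
          refine Fin.lastCases ?_ ?_ k
          · rw [Fin.succ_last, Fin.snoc_last]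
            exact yneg _
          · intro w
            rw [Fin.succ_castSucc, Fin.snoc_castSucc]
            exact ymono (Fin.castSucc_lt_succ (i := w))
      have hsigns : ∀ j : Fin (m+3), 0 < (-1:ℝ)^((m+2) - (j:ℕ)) * p.eval (e j) := by
        refine Fin.cases ?_ ?_
        · rw [he, Fin.cons_zero]
          simpa using hT1
        · intro i
          rw [he, Fin.cons_succ]
          refine Fin.lastCases ?_ ?_ i
          · rw [Fin.snoc_last]
            have hco : ((Fin.last (m+1)).succ : ℕ) = m + 2 := by simp
            rw [hco, Nat.sub_self, pow_zero, one_mul, hypPoly_eval_zero]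
            norm_num
          · intro w
            rw [Fin.snoc_castSucc]
            have hco : (((Fin.castSucc w).succ : Fin (m+2+1)) : ℕ) = (w:ℕ) + 1 := by simp
            rw [hco, show (m+2) - ((w:ℕ)+1) = (m - (w:ℕ)) + 1 from by omega, pow_succ]
            have h1 := hsr w
            have h2 := hkey w
            have hyw : y w < 0 := yneg w
            have hprod : 0 < (-(y w * (1 - y w)))
                * (c1 * (c2 * ((-1:ℝ)^(m - (w:ℕ)) * r.eval (y w)))) := by
              apply mul_pos
              · nlinarith
              · exact mul_pos hc1 (mul_pos hc2 h1)
            have hK : (((m+2:ℕ)):ℝ) * b < 0 := by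
              apply mul_neg_of_pos_of_neg _ hbneg
              positivity
            have h4 : (((m+2:ℕ)):ℝ) * b * ((-1:ℝ)^(m - (w:ℕ)) * p.eval (y w))
                = (-(y w * (1 - y w)))
                  * (c1 * (c2 * ((-1:ℝ)^(m - (w:ℕ)) * r.eval (y w)))) := by
              linear_combination ((-1:ℝ)^(m - (w:ℕ))) * h2
            have h5 : 0 < (((m+2:ℕ)):ℝ) * b * ((-1:ℝ)^(m - (w:ℕ)) * p.eval (y w)) := by
              rw [h4]; exact hprod
            have h6 : (-1:ℝ)^(m - (w:ℕ)) * p.eval (y w) < 0 := by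
              by_contra hcon
              push_neg at hcon
              have := mul_nonpos_of_nonpos_of_nonneg hK.le hcon
              linarith
            nlinarith [h6]
      obtain ⟨S, hScard, hSmem, hSroots⟩ :=
        alt_signs_roots p (m+2) hpdeg hpne e hemono hsigns
      refine ⟨S, hScard, ?_, hSroots⟩
      intro x hx
      have h1 := (hSmem x hx).2
      rwa [helast] at h1

end HypAux

/-- For `b < 1 - n` and `d > 0`, the polynomial `₂F₁(-n, b; d; z)` has exactly `n`
zeros, all real, simple, and lying in `(-∞, 0)`: viewed over `ℂ`, its multiset of roots
is exactly the image of a set of `n` distinct reals in `(-∞, 0)`. -/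
theorem hyp_zeros_in_Iio_zero (n : ℕ) (hn : 0 < n) (b d : ℝ)
    (hb : b < 1 - n) (hd : 0 < d) :
    ∃ S : Finset ℝ, S.card = n ∧ (∀ x ∈ S, x ∈ Set.Iio (0 : ℝ)) ∧
      ((hypPoly n b d).map (algebraMap ℝ ℂ)).roots = S.val.map (fun x => (x : ℂ)) := by
  obtain ⟨S, hcard, hneg, hroots⟩ := HypAux.good n b d hb hd
  refine ⟨S, hcard, fun x hx => hneg x hx, ?_⟩
  have hdeg := HypAux.hypPoly_natDegree hb hd
  have hsplits : (hypPoly n b d).Splits := by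
    apply Polynomial.splits_iff_card_roots.mpr
    rw [hroots, hdeg]
    exact hcard
  rw [hsplits.roots_map, hroots]
  simp
end
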